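/- Let r(1) > 0, r'(1) < 0, D > 0, and for λ ≥ 0 define σ(λ) = -(r'(1)/(1+Dλ) + r(1))·λ. If r'(1) + r(1) < 0, then σ attains its maximum over λ ≥ 0 at λ* = (1/D)(√(-r'(1)/r(1)) - 1), and the maximum value equals σ_c = (1/D)(√(-r'(1)) - √(r(1)))². -/

import Mathlib

theorem sigma_max (r1 rp D : ℝ) (hr1 : 0 < r1) (hrp : rp < 0) (hD : 0 < D)
    (hsum : rp + r1 < 0) :
    (∀ lam : ℝ, 0 ≤ lam →
      -(rp / (1 + D * lam) + r1) * lam ≤ (1 / D) * (Real.sqrt (-rp) - Real.sqrt r1) ^ 2) ∧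
    -(rp / (1 + D * ((1 / D) * (Real.sqrt (-rp / r1) - 1))) + r1) *
        ((1 / D) * (Real.sqrt (-rp / r1) - 1)) =
      (1 / D) * (Real.sqrt (-rp) - Real.sqrt r1) ^ 2 := by
  have ha : (0:ℝ) < -rp := by linarith
  set s := Real.sqrt (-rp) with hs_def
  set t := Real.sqrt r1 with ht_def
  have hs2 : s ^ 2 = -rp := Real.sq_sqrt ha.le
  have ht2 : t ^ 2 = r1 := Real.sq_sqrt hr1.le
  have hspos : 0 < s := Real.sqrt_pos.mpr ha
  have htpos : 0 < t := Real.sqrt_pos.mpr hr1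
  have hrp' : rp = -(s ^ 2) := by linarith
  have hr1' : r1 = t ^ 2 := ht2.symm
  constructor
  · intro lam hlam
    have hu : 0 < 1 + D * lam := by positivity
    have key : (1 / D) * (s - t) ^ 2 - (-(rp / (1 + D * lam) + r1) * lam)
        = (s - t * (1 + D * lam)) ^ 2 / (D * (1 + D * lam)) := by
      rw [hrp', hr1']
      field_simp
      ring
    have h2 : 0 ≤ (s - t * (1 + D * lam)) ^ 2 / (D * (1 + D * lam)) := by positivity
    linarith
  · have hst : Real.sqrt (-rp / r1) = s / t := Real.sqrt_div ha.le r1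
    have hs0 : s ≠ 0 := hspos.ne'
    have ht0 : t ≠ 0 := htpos.ne'
    have hD0 : D ≠ 0 := hD.ne'
    have h1 : 1 + D * ((1 / D) * (s / t - 1)) = s / t := by
      field_simp
      ring
    rw [hst, h1, hrp', hr1']
    rw [div_div_eq_mul_div]
    have h2 : s ^ 2 * t / s = s * t := by field_simp
    field_simp
    ring
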